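/- Let G be a chordal graph, s a simplicial vertex of G, and {v₀, v₁, v₂} a clique of the auxiliary graph G^s with v₁, v₂ ∈ N_G(s) and v₀ ∉ N_G[s]. If there is no witness of the clique {v₀, v₁, v₂}, then {v₀, v₁, v₂} is a clique of G. -/

import Mathlib

/-- The closed neighborhood `N[v]` of a vertex. -/
def closedNbr {V : Type*} (G : SimpleGraph V) (v : V) : Set V := insert v (G.neighborSet v)

/-- A vertex is simplicial if its closed neighborhood is a clique. -/
def Simplicial {V : Type*} (G : SimpleGraph V) (s : V) : Prop := G.IsClique (closedNbr G s)

/-- A vertex is universal if it is adjacent to all other vertices. -/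
def Universal {V : Type*} (G : SimpleGraph V) (v : V) : Prop := ∀ u, u ≠ v → G.Adj v u

/-- The auxiliary graph `G^s` with respect to a simplicial vertex `s`. -/
def auxGraph {V : Type*} (G : SimpleGraph V) (s : V) : SimpleGraph V where
  Adj u v := u ≠ v ∧
    ((u ∉ closedNbr G s ∧ v ∉ closedNbr G s ∧ G.Adj u v) ∨
     (u ∈ closedNbr G s ∧ v ∈ closedNbr G s ∧ G.neighborSet u ∪ G.neighborSet v ≠ Set.univ) ∨
     (u ∈ closedNbr G s ∧ v ∉ closedNbr G s ∧ ¬ closedNbr G v ⊆ closedNbr G u) ∨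
     (v ∈ closedNbr G s ∧ u ∉ closedNbr G s ∧ ¬ closedNbr G u ⊆ closedNbr G v))
  symm := ⟨by
    rintro u v ⟨hne, h⟩
    refine ⟨hne.symm, ?_⟩
    rcases h with ⟨h1, h2, h3⟩ | ⟨h1, h2, h3⟩ | h | h
    · exact Or.inl ⟨h2, h1, h3.symm⟩
    · exact Or.inr (Or.inl ⟨h2, h1, by rwa [Set.union_comm] at h3⟩)
    · exact Or.inr (Or.inr (Or.inr h))
    · exact Or.inr (Or.inr (Or.inl h))⟩
  loopless := ⟨fun v h => h.1 rfl⟩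

/-- A witness of an edge `uv` of `G^s`: a vertex `w ∉ N_G[s]` such that for each end `x`,
`w` is adjacent to `x` in `G` iff `x ∉ N_G[s]`. -/
def EdgeWitness {V : Type*} (G : SimpleGraph V) (s u v w : V) : Prop :=
  w ∉ closedNbr G s ∧ (G.Adj w u ↔ u ∉ closedNbr G s) ∧ (G.Adj w v ↔ v ∉ closedNbr G s)

/-- An edge of `G^s` is collateral if it is an edge of `G` and one end is in `N_G[s]`. -/
def Collateral {V : Type*} (G : SimpleGraph V) (s u v : V) : Prop :=
  (auxGraph G s).Adj u v ∧ G.Adj u v ∧ (u ∈ closedNbr G s ∨ v ∈ closedNbr G s)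

/-- A witness of a clique `K` of `G^s`: a vertex `w ∉ N_G[s]` such that `N_G[w] ∩ K` and
`N_G[s] ∩ K` partition `K`. -/
def CliqueWitness {V : Type*} (G : SimpleGraph V) (s : V) (K : Set V) (w : V) : Prop :=
  w ∉ closedNbr G s ∧ ∀ x ∈ K, (x ∈ closedNbr G w ↔ x ∉ closedNbr G s)

/-- A graph is chordal if it has no induced cycle of length at least four. -/
def Chordal {V : Type*} (G : SimpleGraph V) : Prop :=
  ¬ ∃ (n : ℕ) (f : ZMod n → V), 4 ≤ n ∧ Function.Injective f ∧
      ∀ i j : ZMod n, G.Adj (f i) (f j) ↔ (j = i + 1 ∨ i = j + 1)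

lemma mem_closedNbr {V : Type*} (G : SimpleGraph V) (v x : V) :
    x ∈ closedNbr G v ↔ x = v ∨ G.Adj v x := by
  simp [closedNbr]

lemma zmod4_facts : ∀ i j : ZMod 4, (j = i + 1 ∨ i = j + 1) ↔
    ((i,j) ∈ ([((0:ZMod 4),(1:ZMod 4)),(1,2),(2,3),(3,0),(1,0),(2,1),(3,2),(0,3)] : List (ZMod 4 × ZMod 4))) := by
  unfold ZMod
  decide

lemma no_induced_four {V : Type*} (G : SimpleGraph V) (hG : Chordal G) (a b c d : V)
    (hab : G.Adj a b) (hbc : G.Adj b c) (hcd : G.Adj c d) (hda : G.Adj d a)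
    (hac : ¬ G.Adj a c) (hbd : ¬ G.Adj b d) (hac' : a ≠ c) (hbd' : b ≠ d) : False := by
  apply hG
  refine ⟨4, ![a,b,c,d], le_refl 4, ?_, ?_⟩
  · intro i j h
    fin_cases i <;> fin_cases j <;>
      simp_all [hab.ne, hbc.ne, hcd.ne, hda.ne, hab.ne', hbc.ne', hcd.ne', hda.ne',
        hac', hbd', hac'.symm, hbd'.symm] <;> rfl
  · intro i j
    rw [zmod4_facts]
    fin_cases i <;> fin_cases j <;>
      simp_all [hab, hbc, hcd, hda, hab.symm, hbc.symm, hcd.symm, hda.symm, G.loopless,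
        show ¬ G.Adj c a from fun h => hac h.symm, show ¬ G.Adj d b from fun h => hbd h.symm] <;>
      (unfold ZMod; decide)

/-- If {v₀, v₁, v₂} is a clique of G^s with v₁, v₂ ∈ N_G(s), v₀ ∉ N_G[s],
and the clique has no witness, then {v₀, v₁, v₂} is a clique of G. -/
theorem stmt_5 {V : Type*} [Fintype V] (G : SimpleGraph V) (s v₀ v₁ v₂ : V)
    (hG : Chordal G) (hs : Simplicial G s)
    (h01 : v₀ ≠ v₁) (h02 : v₀ ≠ v₂) (h12 : v₁ ≠ v₂)
    (hcl : (auxGraph G s).IsClique {v₀, v₁, v₂})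
    (hv1 : v₁ ∈ G.neighborSet s) (hv2 : v₂ ∈ G.neighborSet s)
    (hv0 : v₀ ∉ closedNbr G s)
    (hnow : ¬ ∃ w : V, CliqueWitness G s {v₀, v₁, v₂} w) :
    G.IsClique {v₀, v₁, v₂} := by
  have hv1s : v₁ ∈ closedNbr G s := Set.mem_insert_iff.mpr (Or.inr hv1)
  have hv2s : v₂ ∈ closedNbr G s := Set.mem_insert_iff.mpr (Or.inr hv2)
  have a12 : G.Adj v₁ v₂ := hs hv1s hv2s h12
  have e01 : (auxGraph G s).Adj v₀ v₁ := hcl (by simp) (by simp) h01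
  have e02 : (auxGraph G s).Adj v₀ v₂ := hcl (by simp) (by simp) h02
  have hsub1 : ¬ closedNbr G v₀ ⊆ closedNbr G v₁ := by
    rcases e01.2 with ⟨_, h, _⟩ | ⟨h, _, _⟩ | ⟨h, _, _⟩ | ⟨_, _, h⟩
    · exact absurd hv1s h
    · exact absurd h hv0
    · exact absurd h hv0
    · exact h
  have hsub2 : ¬ closedNbr G v₀ ⊆ closedNbr G v₂ := by
    rcases e02.2 with ⟨_, h, _⟩ | ⟨h, _, _⟩ | ⟨h, _, _⟩ | ⟨_, _, h⟩
    · exact absurd hv2s h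
    · exact absurd h hv0
    · exact absurd h hv0
    · exact h
  have mkwit : ∀ x, x ∉ closedNbr G s → v₀ ∈ closedNbr G x →
      v₁ ∉ closedNbr G x → v₂ ∉ closedNbr G x → False := by
    intro x hxs h0 h1 h2
    apply hnow
    refine ⟨x, hxs, ?_⟩
    intro y hy
    simp only [Set.mem_insert_iff, Set.mem_singleton_iff] at hy
    rcases hy with rfl | rfl | rfl
    · exact ⟨fun _ => hv0, fun _ => h0⟩
    · exact iff_of_false h1 (not_not_intro hv1s)
    · exact iff_of_false h2 (not_not_intro hv2s)
  by_cases a01 : G.Adj v₀ v₁ <;> by_cases a02 : G.Adj v₀ v₂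
  · -- both edges present : clique
    intro x hx y hy hne
    simp only [Set.mem_insert_iff, Set.mem_singleton_iff] at hx hy
    rcases hx with rfl | rfl | rfl <;> rcases hy with rfl | rfl | rfl <;>
      first
      | exact absurd rfl hne
      | assumption
      | exact a01.symm
      | exact a02.symm
      | exact a12
      | exact a12.symm
  · -- Adj v₀ v₁, ¬ Adj v₀ v₂
    exfalso
    obtain ⟨u, hu0, hu1⟩ := Set.not_subset.mp hsub1
    have hune0 : u ≠ v₀ := by
      rintro rfl
      exact hu1 ((mem_closedNbr G v₁ u).mpr (Or.inr a01.symm))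
    have hadj_u0 : G.Adj v₀ u := ((mem_closedNbr G v₀ u).mp hu0).resolve_left hune0
    have hune1 : u ≠ v₁ := fun h => hu1 ((mem_closedNbr G v₁ u).mpr (Or.inl h))
    have hnadj1u : ¬ G.Adj v₁ u := fun h => hu1 ((mem_closedNbr G v₁ u).mpr (Or.inr h))
    have hus : u ∉ closedNbr G s := fun h => hnadj1u (hs hv1s h hune1.symm)
    have hune2 : u ≠ v₂ := by rintro rfl; exact hus hv2s
    have h2u : G.Adj u v₂ := by
      by_contra hn
      refine mkwit u hus ((mem_closedNbr G u v₀).mpr (Or.inr hadj_u0.symm)) ?_ ?_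
      · intro h
        rcases (mem_closedNbr G u v₁).mp h with h | h
        · exact hune1 h.symm
        · exact hnadj1u h.symm
      · intro h
        rcases (mem_closedNbr G u v₂).mp h with h | h
        · exact hune2 h.symm
        · exact hn h
    exact no_induced_four G hG v₀ v₁ v₂ u a01 a12 h2u.symm hadj_u0.symm
      a02 hnadj1u h02 hune1.symm
  · -- ¬ Adj v₀ v₁, Adj v₀ v₂
    exfalso
    obtain ⟨u, hu0, hu2⟩ := Set.not_subset.mp hsub2
    have hune0 : u ≠ v₀ := by
      rintro rfl
      exact hu2 ((mem_closedNbr G v₂ u).mpr (Or.inr a02.symm))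
    have hadj_u0 : G.Adj v₀ u := ((mem_closedNbr G v₀ u).mp hu0).resolve_left hune0
    have hune2 : u ≠ v₂ := fun h => hu2 ((mem_closedNbr G v₂ u).mpr (Or.inl h))
    have hnadj2u : ¬ G.Adj v₂ u := fun h => hu2 ((mem_closedNbr G v₂ u).mpr (Or.inr h))
    have hus : u ∉ closedNbr G s := fun h => hnadj2u (hs hv2s h hune2.symm)
    have hune1 : u ≠ v₁ := by rintro rfl; exact hus hv1s
    have h1u : G.Adj u v₁ := by
      by_contra hn
      refine mkwit u hus ((mem_closedNbr G u v₀).mpr (Or.inr hadj_u0.symm)) ?_ ?_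
      · intro h
        rcases (mem_closedNbr G u v₁).mp h with h | h
        · exact hune1 h.symm
        · exact hn h
      · intro h
        rcases (mem_closedNbr G u v₂).mp h with h | h
        · exact hune2 h.symm
        · exact hnadj2u h.symm
    exact no_induced_four G hG v₀ v₂ v₁ u a02 a12.symm h1u.symm hadj_u0.symm
      a01 hnadj2u h01 hune2.symm
  · -- neither edge : v₀ itself is a witness
    exfalso
    refine mkwit v₀ hv0 ((mem_closedNbr G v₀ v₀).mpr (Or.inl rfl)) ?_ ?_
    · intro h
      rcases (mem_closedNbr G v₀ v₁).mp h with h | h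
      · exact h01 h.symm
      · exact a01 h
    · intro h
      rcases (mem_closedNbr G v₀ v₂).mp h with h | h
      · exact h02 h.symm
      · exact a02 h
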